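/- A type II tensor can be continuously deformed onto its boost-weight-zero part by boosts: let T be a rank-r tensor on ℝ⁴ all of whose components of positive boost weight vanish, and for λ ∈ ℝ let B_λ = diag(e^λ, e^{−λ}, 1, 1) be the boost (an η-orthogonal matrix). Then (B_λ·T)_{a₁⋯a_r} = e^{λ·b} T_{a₁⋯a_r}, where b is the boost weight of the component, and B_λ·T converges, as λ → ∞, to the tensor (T)₀ obtained by keeping exactly the boost-weight-zero components of T. -/

import Mathlib

open Matrix

/-- The null-frame Minkowski metric on `ℝ⁴` as a matrix (indices 0,1,2,3 for 1,2,3,4). -/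
noncomputable def etaM : Matrix (Fin 4) (Fin 4) ℝ :=
  Matrix.of fun a b =>
    if (a = 0 ∧ b = 1) ∨ (a = 1 ∧ b = 0) then -1
    else if (a = 2 ∧ b = 2) ∨ (a = 3 ∧ b = 3) then 1 else 0

/-- The boost weight of a rank-`r` component index. -/
def bw {r : ℕ} (a : Fin r → Fin 4) : ℤ :=
  ((Finset.univ.filter fun i => a i = 0).card : ℤ) -
    ((Finset.univ.filter fun i => a i = 1).card : ℤ)

/-- Action of a frame-transformation matrix on a rank-`r` tensor. -/
noncomputable def act {r : ℕ} (Λ : Matrix (Fin 4) (Fin 4) ℝ) (T : (Fin r → Fin 4) → ℝ) :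
    (Fin r → Fin 4) → ℝ :=
  fun a => ∑ b : Fin r → Fin 4, (∏ i, Λ (b i) (a i)) * T b

/-- The boost `B_λ = diag(e^λ, e^{−λ}, 1, 1)`. -/
noncomputable def boostM (l : ℝ) : Matrix (Fin 4) (Fin 4) ℝ :=
  Matrix.diagonal ![Real.exp l, Real.exp (-l), 1, 1]

lemma boost_diag (l : ℝ) (j : Fin 4) :
    boostM l j j = Real.exp (l * ((if j = 0 then (1:ℤ) else if j = 1 then -1 else 0) : ℝ)) := by
  fin_cases j <;> simp [boostM, Matrix.diagonal]

lemma act_boost {r : ℕ} (T : (Fin r → Fin 4) → ℝ) (l : ℝ) (a : Fin r → Fin 4) :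
    act (boostM l) T a = Real.exp (l * (bw a : ℝ)) * T a := by
  unfold act
  rw [Finset.sum_eq_single a]
  · congr 1
    have : ∀ i : Fin r, boostM l (a i) (a i) =
        Real.exp (l * ((if a i = 0 then (1:ℤ) else if a i = 1 then -1 else 0) : ℝ)) :=
      fun i => boost_diag l (a i)
    rw [Finset.prod_congr rfl (fun i _ => this i), ← Real.exp_sum]
    congr 1
    rw [← Finset.mul_sum]
    congr 1
    have : (bw a : ℝ) = ((∑ i : Fin r, (if a i = 0 then (1:ℤ) else if a i = 1 then -1 else 0)) : ℝ) := by
      congr 1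
      unfold bw
      rw [Finset.card_filter, Finset.card_filter]
      push_cast
      rw [← Finset.sum_sub_distrib]
      apply Finset.sum_congr rfl
      intro i _
      rcases eq_or_ne (a i) 0 with h | h
      · simp [h]
      · rcases eq_or_ne (a i) 1 with h1 | h1 <;> simp [h, h1]
    rw [this]
  · intro b _ hb
    have : ∃ i, b i ≠ a i := by
      by_contra h
      push_neg at h
      exact hb (funext h)
    obtain ⟨i, hi⟩ := this
    have : boostM l (b i) (a i) = 0 := Matrix.diagonal_apply_ne _ hi
    rw [Finset.prod_eq_zero (Finset.mem_univ i) this, zero_mul]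
  · intro h; exact absurd (Finset.mem_univ a) h

/-- the boost `B_λ` is `η`-orthogonal, it rescales each component of a tensor by
`e^{λ b}` where `b` is its boost weight, and if all positive boost weight components of `T`
vanish then `B_λ·T` converges as `λ → ∞` to the boost-weight-zero part of `T`. -/
theorem boost_deforms_typeII_to_bw_zero_part
    {r : ℕ} (T : (Fin r → Fin 4) → ℝ) (hT : ∀ a, 0 < bw a → T a = 0) :
    (∀ l : ℝ, (boostM l)ᵀ * etaM * boostM l = etaM) ∧
    (∀ (l : ℝ) (a : Fin r → Fin 4),
      act (boostM l) T a = Real.exp (l * (bw a : ℝ)) * T a) ∧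
    Filter.Tendsto (fun l : ℝ => act (boostM l) T) Filter.atTop
      (nhds fun a => if bw a = 0 then T a else 0) := by
  refine ⟨?_, act_boost T, ?_⟩
  · intro l
    ext i j
    fin_cases i <;> fin_cases j <;>
      simp [boostM, etaM, Matrix.mul_apply, Fin.sum_univ_four, Matrix.diagonal,
        ← Real.exp_add] <;> ring_nf
  · rw [tendsto_pi_nhds]
    intro a
    simp only [act_boost]
    rcases lt_trichotomy (bw a) 0 with h | h | h
    · rw [if_neg h.ne]
      have hc : Filter.Tendsto (fun l : ℝ => l * (bw a : ℝ)) Filter.atTop Filter.atBot := by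
        apply Filter.Tendsto.atTop_mul_const_of_neg (by exact_mod_cast h) Filter.tendsto_id
      have := (Real.tendsto_exp_atBot.comp hc).mul_const (T a)
      simpa using this
    · rw [if_pos h, h]
      simp
    · rw [if_neg h.ne', hT a h]
      simp
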